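/- Cone-type invariance of first-passage probabilities: for every x ∈ 𝒯 and every i ∈ Fin d, F(x·i, x) = F([i], o), i.e., the probability that the embedded chain started at a polymer ending in monomer i ever reaches its predecessor depends only on the terminal monomer type i. -/
import Mathlib


/-- Cone-type invariance of first-passage probabilities: for every state
`x` and every monomer type `i`, `F(x·i, x) = F([i], o)`, where
`F(x,y) = Σ_{n≥1} fⁿ(x,y)` with `f¹ = p` and `fⁿ⁺¹(x,y) = Σ_{z≠y} p(x,z)·fⁿ(z,y)`:
the probability that the embedded chain started at a polymer ending in monomer `i` ever
reaches its predecessor depends only on the terminal monomer type `i`. -/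
theorem stmt13 (d : ℕ) (hd : 1 ≤ d) (kp km : Fin d → ℝ)
    (hkp : ∀ i, 0 < kp i) (hkm : ∀ i, 0 < km i)
    (K : ℝ) (hK : K = ∑ i : Fin d, kp i)
    (p : List (Fin d) → List (Fin d) → ℝ)
    (hp_root : ∀ i : Fin d, p [] [i] = kp i / K)
    (hp_up : ∀ (x : List (Fin d)) (i j : Fin d),
      p (x ++ [i]) (x ++ [i] ++ [j]) = kp j / (km i + K))
    (hp_down : ∀ (x : List (Fin d)) (i : Fin d), p (x ++ [i]) x = km i / (km i + K))
    (hp_zero : ∀ x y : List (Fin d),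
      (¬ ∃ i : Fin d, y = x ++ [i]) → (¬ ∃ i : Fin d, x = y ++ [i]) → p x y = 0)
    (f : ℕ → List (Fin d) → List (Fin d) → ℝ)
    (hf1 : ∀ x y : List (Fin d), f 1 x y = p x y)
    (hfs : ∀ n : ℕ, 1 ≤ n → ∀ x y : List (Fin d),
      f (n + 1) x y = ∑' z : List (Fin d), if z = y then 0 else p x z * f n z y) :
    ∀ (x : List (Fin d)) (i : Fin d),
      (∑' n : ℕ, f (n + 1) (x ++ [i]) x) = ∑' n : ℕ, f (n + 1) [i] [] := by
  -- `p` vanishes unless the target is structurally adjacent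
  have hpz : ∀ (x u z : List (Fin d)), u ≠ [] → z ≠ x →
      (∀ v : List (Fin d), v ≠ [] → z ≠ x ++ v) → p (x ++ u) z = 0 := by
    intro x u z hu hzx hv
    apply hp_zero
    · rintro ⟨j, rfl⟩
      exact hv (u ++ [j]) (by simp) (by simp)
    · rintro ⟨j, hj⟩
      rcases List.eq_nil_or_concat u with rfl | ⟨u', i, rfl⟩
      · exact hu rfl
      · simp only [List.concat_eq_append] at hj
        rw [← List.append_assoc] at hj
        obtain ⟨h1, h2⟩ := List.append_inj' hj rfl
        rcases eq_or_ne u' [] with rfl | hu'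
        · exact hzx (by simpa using h1.symm)
        · exact hv u' hu' h1.symm
  -- translation invariance of `p` away from the root
  have hpp : ∀ (x u v : List (Fin d)), u ≠ [] → p (x ++ u) (x ++ v) = p u v := by
    intro x u v hu
    by_cases hup : ∃ j : Fin d, v = u ++ [j]
    · obtain ⟨j, rfl⟩ := hup
      rcases List.eq_nil_or_concat u with rfl | ⟨u', i, rfl⟩
      · exact absurd rfl hu
      · simp only [List.concat_eq_append]
        have h1 := hp_up (x ++ u') i j
        have h2 := hp_up u' i j
        simpa [List.append_assoc] using h1.trans h2.symm
    · by_cases hdn : ∃ i : Fin d, u = v ++ [i]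
      · obtain ⟨i, rfl⟩ := hdn
        have h1 := hp_down (x ++ v) i
        have h2 := hp_down v i
        simpa [List.append_assoc] using h1.trans h2.symm
      · rw [hp_zero u v (by rintro ⟨j, rfl⟩; exact hup ⟨j, rfl⟩)
            (by rintro ⟨j, rfl⟩; exact hdn ⟨j, rfl⟩)]
        apply hp_zero
        · rintro ⟨j, hj⟩
          rw [List.append_assoc] at hj
          exact hup ⟨j, List.append_cancel_left hj⟩
        · rintro ⟨j, hj⟩
          rw [List.append_assoc] at hj
          exact hdn ⟨j, List.append_cancel_left hj⟩
  -- main induction: first-passage translation invariance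
  have hmain : ∀ n : ℕ, 1 ≤ n → ∀ (x u : List (Fin d)), u ≠ [] →
      f n (x ++ u) x = f n u [] := by
    intro n hn
    induction n, hn using Nat.le_induction with
    | base =>
      intro x u hu
      rw [hf1, hf1]
      rcases List.eq_nil_or_concat u with rfl | ⟨u', i, rfl⟩
      · exact absurd rfl hu
      simp only [List.concat_eq_append]
      rcases eq_or_ne u' [] with rfl | hu'
      · have h1 := hp_down x i
        have h2 := hp_down ([] : List (Fin d)) i
        simpa using h1.trans h2.symm
      · rw [hp_zero (x ++ (u' ++ [i])) x
            (by rintro ⟨j, hj⟩; simpa using congrArg List.length hj)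
            (by rintro ⟨j, hj⟩
                have h2 := List.append_cancel_left hj
                have hl := congrArg List.length h2
                simp only [List.length_append, List.length_cons, List.length_nil] at hl
                exact hu' (List.eq_nil_of_length_eq_zero (by omega)))]
        rw [hp_zero (u' ++ [i]) []
            (by rintro ⟨j, hj⟩; simpa using congrArg List.length hj)
            (by rintro ⟨j, hj⟩
                have hl := congrArg List.length hj
                simp only [List.length_append, List.length_cons, List.length_nil] at hl
                exact hu' (List.eq_nil_of_length_eq_zero (by omega)))]
    | succ n hn ih =>
      intro x u hu
      rw [hfs n hn, hfs n hn]
      apply tsum_eq_tsum_of_ne_zero_bij (fun v => x ++ (v : List (Fin d)))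
      · intro a b hab
        exact Subtype.ext (List.append_cancel_left hab)
      · intro z hz
        simp only [Function.mem_support] at hz
        by_cases hzx : z = x
        · simp [hzx] at hz
        by_cases hzv : ∀ v : List (Fin d), v ≠ [] → z ≠ x ++ v
        · rw [if_neg hzx, hpz x u z hu hzx hzv] at hz
          simp at hz
        · push_neg at hzv
          obtain ⟨v, hv, rfl⟩ := hzv
          rw [if_neg hzx, hpp x u v hu, ih x v hv] at hz
          refine ⟨⟨v, ?_⟩, rfl⟩
          simpa [Function.mem_support, hv] using hz
      · rintro ⟨v, hv⟩
        simp only [Function.mem_support] at hv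
        have hvne : v ≠ [] := by rintro rfl; simp at hv
        have hxv : x ++ v ≠ x := by
          intro h
          have hl := congrArg List.length h
          simp only [List.length_append] at hl
          exact hvne (List.eq_nil_of_length_eq_zero (by omega))
        simp only [if_neg hxv, if_neg hvne, hpp x u v hu, ih x v hvne]
  intro x i
  exact tsum_congr fun n => hmain (n + 1) (Nat.le_add_left 1 n) x [i] (by simp)
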